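/- arXiv:2507.13887 — 3 statements merged into one kernel-verified Lean document; each statement's English description precedes it below -/
import Mathlib

section
/- For every n ≥ 1 and any pairwise distinct points x₁, …, xₙ ∈ ℝ^N, the symmetric n×n real matrix Z with entries Z_{ij} = exp(−‖x_i − x_j‖) is positive definite; in particular Z is invertible. -/
open MeasureTheory Real Set

/-- integrability of the Glaisher integrand -/
lemma glaisher_integrable (c : ℝ) (hc : 0 ≤ c) :
    IntegrableOn (fun u : ℝ => Real.exp (-(u ^ 2 + c / u ^ 2))) (Ioi 0) := by
  have hmeas : Measurable fun u : ℝ => Real.exp (-(u ^ 2 + c / u ^ 2)) := by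
    apply Real.measurable_exp.comp
    exact ((measurable_id.pow_const 2).add (measurable_const.div (measurable_id.pow_const 2))).neg
  have hint : Integrable (fun u : ℝ => Real.exp (-1 * u ^ 2)) := integrable_exp_neg_mul_sq one_pos
  refine (Integrable.mono hint.restrict hmeas.aestronglyMeasurable ?_)
  filter_upwards with u
  rw [Real.norm_eq_abs, Real.norm_eq_abs, abs_of_pos (Real.exp_pos _), abs_of_pos (Real.exp_pos _)]
  apply Real.exp_le_exp.2
  have : 0 ≤ c / u ^ 2 := div_nonneg hc (sq_nonneg u)
  nlinarith

lemma glaisher (c : ℝ) (hc : 0 < c) :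
    ∫ u in Ioi (0:ℝ), Real.exp (-(u ^ 2 + c ^ 2 / u ^ 2)) =
      Real.sqrt π / 2 * Real.exp (-(2 * c)) := by
  set g : ℝ → ℝ := fun u => Real.exp (-(u ^ 2 + c ^ 2 / u ^ 2)) with hg
  -- data for substitution u ↦ c/u
  have hder : ∀ u ∈ Ioi (0:ℝ), HasDerivWithinAt (fun u : ℝ => c / u) (-(c / u ^ 2)) (Ioi 0) u := by
    intro u hu
    have : HasDerivAt (fun u : ℝ => c / u) (-(c / u ^ 2)) u := by
      simpa [div_eq_mul_inv, sq] using (hasDerivAt_inv (ne_of_gt hu)).const_mul c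
    exact this.hasDerivWithinAt
  have hinj : InjOn (fun u : ℝ => c / u) (Ioi 0) := by
    intro a ha b hb hab
    have ha' : (0:ℝ) < a := ha
    have hb' : (0:ℝ) < b := hb
    have hab' : c / a = c / b := hab
    rw [div_eq_div_iff ha'.ne' hb'.ne'] at hab'
    have : c * b = c * a := by linarith
    exact (mul_left_cancel₀ hc.ne' this).symm
  have himg : (fun u : ℝ => c / u) '' Ioi 0 = Ioi 0 := by
    ext y
    constructor
    · rintro ⟨u, hu, rfl⟩; exact div_pos hc hu
    · intro hy; exact ⟨c / y, div_pos hc hy, by field_simp⟩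
  have hpt : ∀ u ∈ Ioi (0:ℝ), |(-(c / u ^ 2))| • g (c / u) = (c / u ^ 2) * g u := by
    intro u hu
    have hu' : (0:ℝ) < u := hu
    have h1 : |(-(c / u ^ 2))| = c / u ^ 2 := by
      rw [abs_neg, abs_of_pos (div_pos hc (by positivity))]
    have h2 : g (c / u) = g u := by
      simp only [hg]
      congr 1
      have hu0 : u ≠ 0 := hu'.ne'
      have hc0 : c ≠ 0 := hc.ne'
      field_simp
      ring
    rw [h1, h2, smul_eq_mul]
  -- substitution u ↦ c/u
  have hsub1 : ∫ u in Ioi (0:ℝ), g u = ∫ u in Ioi (0:ℝ), (c / u ^ 2) * g u := by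
    have := integral_image_eq_integral_abs_deriv_smul measurableSet_Ioi hder hinj g
    rw [himg] at this
    rw [this]
    exact setIntegral_congr_fun measurableSet_Ioi hpt
  have hint : IntegrableOn g (Ioi 0) := glaisher_integrable (c ^ 2) (sq_nonneg c)
  have hint2 : IntegrableOn (fun u => (c / u ^ 2) * g u) (Ioi 0) := by
    have := (integrableOn_image_iff_integrableOn_abs_deriv_smul measurableSet_Ioi hder hinj g)
    rw [himg] at this
    exact (this.1 hint).congr_fun hpt measurableSet_Ioi
  -- substitution t = u - c/u
  have hsub2 : ∫ t : ℝ, Real.exp (-t ^ 2) =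
      ∫ u in Ioi (0:ℝ), (1 + c / u ^ 2) * (Real.exp (2 * c) * g u) := by
    have himg2 : (fun u : ℝ => u - c / u) '' Ioi 0 = univ := by
      apply eq_univ_of_forall
      intro t
      have hs : Real.sqrt (t ^ 2 + 4 * c) ^ 2 = t ^ 2 + 4 * c :=
        Real.sq_sqrt (by nlinarith [sq_nonneg t])
      have h1 : |t| < Real.sqrt (t ^ 2 + 4 * c) := by
        rw [← Real.sqrt_sq_eq_abs]
        exact Real.sqrt_lt_sqrt (sq_nonneg t) (by linarith)
      have hu : (0:ℝ) < (t + Real.sqrt (t ^ 2 + 4 * c)) / 2 := by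
        nlinarith [le_abs_self t, abs_nonneg t]
      refine ⟨(t + Real.sqrt (t ^ 2 + 4 * c)) / 2, hu, ?_⟩
      have hne : t + Real.sqrt (t ^ 2 + 4 * c) ≠ 0 := by
        intro h; rw [h] at hu; simp at hu
      show _ - _ = t
      field_simp
      nlinarith
    have hder2 : ∀ u ∈ Ioi (0:ℝ),
        HasDerivWithinAt (fun u : ℝ => u - c / u) (1 + c / u ^ 2) (Ioi 0) u := by
      intro u hu
      have : HasDerivAt (fun u : ℝ => u - c / u) (1 - -(c / u ^ 2)) u := by
        apply (hasDerivAt_id u).sub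
        exact (by simpa [div_eq_mul_inv, sq] using (hasDerivAt_inv (ne_of_gt hu)).const_mul c :
          HasDerivAt (fun u : ℝ => c / u) (-(c / u ^ 2)) u)
      simpa using this.hasDerivWithinAt
    have hinj2 : InjOn (fun u : ℝ => u - c / u) (Ioi 0) := by
      have : StrictMonoOn (fun u : ℝ => u - c / u) (Ioi 0) := by
        intro a ha b hb hab
        have ha' : (0:ℝ) < a := ha
        have : c / b < c / a := div_lt_div_of_pos_left hc ha' hab
        simp only
        linarith
      exact this.injOn
    have := integral_image_eq_integral_abs_deriv_smul measurableSet_Ioi hder2 hinj2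
      (fun t => Real.exp (-t ^ 2))
    rw [himg2] at this
    rw [← setIntegral_univ, this]
    apply setIntegral_congr_fun measurableSet_Ioi
    intro u hu
    have hu' : (0:ℝ) < u := hu
    have h1 : |1 + c / u ^ 2| = 1 + c / u ^ 2 := abs_of_pos (by positivity)
    have h2 : Real.exp (-(u - c / u) ^ 2) = Real.exp (2 * c) * g u := by
      rw [hg, ← Real.exp_add]
      congr 1
      field_simp
      ring
    simp only [smul_eq_mul, h1, h2]
  have hgauss : ∫ t : ℝ, Real.exp (-t ^ 2) = Real.sqrt π := by
    simpa using integral_gaussian 1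
  have key : Real.sqrt π = Real.exp (2 * c) * (2 * ∫ u in Ioi (0:ℝ), g u) := by
    calc Real.sqrt π = ∫ t : ℝ, Real.exp (-t ^ 2) := hgauss.symm
      _ = ∫ u in Ioi (0:ℝ), (1 + c / u ^ 2) * (Real.exp (2 * c) * g u) := hsub2
      _ = ∫ u in Ioi (0:ℝ),
          (Real.exp (2 * c) * g u + Real.exp (2 * c) * ((c / u ^ 2) * g u)) := by
          apply setIntegral_congr_fun measurableSet_Ioi
          intro u hu
          ring
      _ = Real.exp (2 * c) * (∫ u in Ioi (0:ℝ), g u)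
          + Real.exp (2 * c) * ∫ u in Ioi (0:ℝ), (c / u ^ 2) * g u := by
          rw [integral_add (hint.const_mul _) (hint2.const_mul _), integral_const_mul,
            integral_const_mul]
      _ = Real.exp (2 * c) * (2 * ∫ u in Ioi (0:ℝ), g u) := by rw [← hsub1]; ring
  rw [Real.exp_neg]
  have he : Real.exp (2 * c) ≠ 0 := (Real.exp_pos _).ne'
  field_simp at key ⊢
  linarith

open Finset Filter
open scoped Nat

lemma real_exp_tsum (t : ℝ) : Real.exp t = ∑' k : ℕ, t ^ k / k ! := by
  rw [Real.exp_eq_exp_ℝ, NormedSpace.exp_eq_tsum_div]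

lemma gram_pow_nonneg {n N : ℕ} (x : Fin n → EuclideanSpace ℝ (Fin N))
    (w : Fin n → ℝ) (k : ℕ) :
    0 ≤ ∑ i, ∑ j, w i * w j * (inner ℝ (x i) (x j) : ℝ) ^ k := by
  have hinner : ∀ i j, (inner ℝ (x i) (x j) : ℝ) = ∑ a, x i a * x j a := by
    intro i j
    simp [PiLp.inner_apply, RCLike.inner_apply, mul_comm]
  have hpow : ∀ i j, (inner ℝ (x i) (x j) : ℝ) ^ k
      = ∑ p : Fin k → Fin N, ∏ l, x i (p l) * x j (p l) := by
    intro i j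
    rw [hinner, ← Fin.prod_const k, Finset.prod_univ_sum]
    simp [Fintype.piFinset_univ]
  calc (0:ℝ) ≤ ∑ p : Fin k → Fin N, (∑ i, w i * ∏ l, x i (p l)) ^ 2 := by positivity
    _ = ∑ p : Fin k → Fin N, ∑ i, ∑ j,
        (w i * ∏ l, x i (p l)) * (w j * ∏ l, x j (p l)) := by
        apply Finset.sum_congr rfl
        intro p _
        rw [sq, Finset.sum_mul_sum]
    _ = ∑ i, ∑ p : Fin k → Fin N, ∑ j,
        (w i * ∏ l, x i (p l)) * (w j * ∏ l, x j (p l)) := Finset.sum_comm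
    _ = ∑ i, ∑ j, ∑ p : Fin k → Fin N,
        (w i * ∏ l, x i (p l)) * (w j * ∏ l, x j (p l)) := by
        exact Finset.sum_congr rfl fun i _ => Finset.sum_comm
    _ = ∑ i, ∑ j, w i * w j * (inner ℝ (x i) (x j) : ℝ) ^ k := by
        apply Finset.sum_congr rfl; intro i _
        apply Finset.sum_congr rfl; intro j _
        rw [hpow, Finset.mul_sum]
        apply Finset.sum_congr rfl; intro p _
        rw [Finset.prod_mul_distrib]
        ring

lemma gauss_quad_nonneg {n N : ℕ} (x : Fin n → EuclideanSpace ℝ (Fin N))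
    (v : Fin n → ℝ) (s : ℝ) (hs : 0 ≤ s) :
    0 ≤ ∑ i, ∑ j, v i * v j * Real.exp (-(s * dist (x i) (x j) ^ 2)) := by
  set w : Fin n → ℝ := fun i => v i * Real.exp (-(s * ‖x i‖ ^ 2)) with hw
  have hterm : ∀ i j, v i * v j * Real.exp (-(s * dist (x i) (x j) ^ 2))
      = w i * w j * Real.exp (2 * s * (inner ℝ (x i) (x j) : ℝ)) := by
    intro i j
    rw [hw]
    simp only
    rw [dist_eq_norm, norm_sub_sq_real (x i) (x j)]
    rw [show -(s * (‖x i‖ ^ 2 - 2 * (inner ℝ (x i) (x j) : ℝ) + ‖x j‖ ^ 2))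
      = -(s * ‖x i‖ ^ 2) + (-(s * ‖x j‖ ^ 2) + 2 * s * (inner ℝ (x i) (x j) : ℝ)) by ring]
    rw [Real.exp_add, Real.exp_add]
    ring
  simp only [hterm]
  have hsummand : ∀ (i j : Fin n), Summable (fun k : ℕ =>
      w i * w j * ((2 * s * (inner ℝ (x i) (x j) : ℝ)) ^ k / k !)) := by
    intro i j
    exact (Real.summable_pow_div_factorial _).mul_left _
  have hexp : ∀ i j, w i * w j * Real.exp (2 * s * (inner ℝ (x i) (x j) : ℝ))
      = ∑' k : ℕ, w i * w j * ((2 * s * (inner ℝ (x i) (x j) : ℝ)) ^ k / k !) := by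
    intro i j
    rw [real_exp_tsum, ← tsum_mul_left]
  simp only [hexp]
  have h1 : ∀ i : Fin n, ∑ j, ∑' k : ℕ,
      w i * w j * ((2 * s * (inner ℝ (x i) (x j) : ℝ)) ^ k / k !)
      = ∑' k : ℕ, ∑ j, w i * w j * ((2 * s * (inner ℝ (x i) (x j) : ℝ)) ^ k / k !) := by
    intro i
    exact (Summable.tsum_finsetSum (fun j _ => hsummand i j)).symm
  simp only [h1]
  rw [← Summable.tsum_finsetSum (fun i _ => summable_sum (fun j _ => hsummand i j))]
  apply tsum_nonneg
  intro k
  have hterm2 : ∀ i j : Fin n, w i * w j * ((2 * s * (inner ℝ (x i) (x j) : ℝ)) ^ k / k !)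
      = ((2 * s) ^ k / k !) * (w i * w j * (inner ℝ (x i) (x j) : ℝ) ^ k) := by
    intro i j
    rw [mul_pow]
    ring
  simp only [hterm2, ← Finset.mul_sum]
  apply mul_nonneg
  · apply div_nonneg (pow_nonneg (by linarith) k) (by positivity)
  · exact gram_pow_nonneg x w k

lemma exp_neg_eq_integral (a : ℝ) (ha : 0 ≤ a) :
    Real.exp (-a) = (2 / Real.sqrt π) *
      ∫ u in Ioi (0:ℝ), Real.exp (-(u ^ 2 + a ^ 2 / 4 / u ^ 2)) := by
  have hπ : (0:ℝ) < Real.sqrt π := Real.sqrt_pos.2 Real.pi_pos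
  rcases eq_or_lt_of_le ha with h0 | hpos
  · rw [← h0]
    have hgauss : ∫ u in Ioi (0:ℝ), Real.exp (-(u ^ 2)) = Real.sqrt π / 2 := by
      have := integral_gaussian_Ioi 1
      simp only [neg_mul, one_mul] at this
      rw [this]
      norm_num
    simp only [ne_eq, OfNat.ofNat_ne_zero, not_false_eq_true, zero_pow, zero_div, add_zero,
      neg_zero, Real.exp_zero, hgauss]
    field_simp
  · have hc : (0:ℝ) < a / 2 := by linarith
    have hform : ∀ u : ℝ, u ^ 2 + a ^ 2 / 4 / u ^ 2 = u ^ 2 + (a / 2) ^ 2 / u ^ 2 := by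
      intro u; rw [div_pow]; norm_num
    simp only [hform]
    rw [glaisher (a / 2) hc, show 2 * (a / 2) = a by ring]
    field_simp

/-- For pairwise distinct points `x₁, …, xₙ ∈ ℝ^N`, the symmetric matrix
`Z = (exp (−‖xᵢ − xⱼ‖))` is positive definite; in particular it is invertible. -/
theorem expNegDistMatrix_posDef (N n : ℕ) (hn : 1 ≤ n)
    (x : Fin n → EuclideanSpace ℝ (Fin N)) (hx : Function.Injective x) :
    (Matrix.of fun i j : Fin n => Real.exp (-dist (x i) (x j))).PosDef ∧
      IsUnit (Matrix.of fun i j : Fin n => Real.exp (-dist (x i) (x j))) := by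
  classical
  have hπ : (0:ℝ) < Real.sqrt π := Real.sqrt_pos.2 Real.pi_pos
  set M : Matrix (Fin n) (Fin n) ℝ :=
    Matrix.of fun i j : Fin n => Real.exp (-dist (x i) (x j)) with hM
  have herm : M.IsHermitian := by
    apply Matrix.ext
    intro i j
    simp [hM, Matrix.conjTranspose_apply, dist_comm]
  have hmain : ∀ v : Fin n → ℝ, v ≠ 0 → 0 < dotProduct (star v) (M.mulVec v) := by
    intro v hv
    set d : Fin n → Fin n → ℝ := fun i j => dist (x i) (x j) with hd
    have hdnn : ∀ i j, 0 ≤ d i j := fun i j => dist_nonneg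
    have hdot : dotProduct (star v) (M.mulVec v)
        = ∑ i, ∑ j, v i * v j * Real.exp (-(d i j)) := by
      simp only [dotProduct, Matrix.mulVec, Matrix.of_apply, Pi.star_apply,
        star_trivial, hM, hd]
      apply Finset.sum_congr rfl; intro i _
      rw [Finset.mul_sum]
      apply Finset.sum_congr rfl; intro j _
      ring
    set Q : ℝ → ℝ := fun s => ∑ i, ∑ j, v i * v j * Real.exp (-(s * d i j ^ 2)) with hQ
    have hQnn : ∀ s : ℝ, 0 ≤ s → 0 ≤ Q s := fun s hs => gauss_quad_nonneg x v s hs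
    have hvpos : 0 < ∑ i, v i ^ 2 := by
      obtain ⟨i, hvi⟩ : ∃ i, v i ≠ 0 := Function.ne_iff.1 hv
      exact Finset.sum_pos' (fun j _ => sq_nonneg _)
        ⟨i, Finset.mem_univ i, by positivity⟩
    have hlim : Filter.Tendsto Q Filter.atTop (nhds (∑ i, v i ^ 2)) := by
      have hterm : ∀ i j : Fin n, Filter.Tendsto
          (fun s : ℝ => v i * v j * Real.exp (-(s * d i j ^ 2))) Filter.atTop
          (nhds (if i = j then v i ^ 2 else 0)) := by
        intro i j
        by_cases hij : i = j
        · subst hij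
          have hconst : ∀ s : ℝ, v i * v i * Real.exp (-(s * d i i ^ 2)) = v i ^ 2 := by
            intro s
            simp only [hd, dist_self]
            simp only [ne_eq, OfNat.ofNat_ne_zero, not_false_eq_true, zero_pow, mul_zero,
              neg_zero, Real.exp_zero, mul_one]
            ring
          rw [if_pos rfl]
          exact tendsto_const_nhds.congr (fun s => (hconst s).symm)
        · have hdp : 0 < d i j := dist_pos.2 fun h => hij (hx h)
          rw [if_neg hij]
          have h1 : Filter.Tendsto (fun s : ℝ => -(s * d i j ^ 2)) Filter.atTop Filter.atBot :=
            tendsto_neg_atTop_atBot.comp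
              (Filter.tendsto_id.atTop_mul_const (by positivity : 0 < d i j ^ 2))
          have h2 : Filter.Tendsto (fun s : ℝ => Real.exp (-(s * d i j ^ 2)))
              Filter.atTop (nhds 0) := Real.tendsto_exp_atBot.comp h1
          simpa using h2.const_mul (v i * v j)
      have := Filter.Tendsto.congr (f₁ := fun s => ∑ i, ∑ j,
          v i * v j * Real.exp (-(s * d i j ^ 2))) (fun s => rfl)
        (tendsto_finset_sum Finset.univ fun i _ =>
          tendsto_finset_sum Finset.univ fun j _ => hterm i j)
      simpa using this
    obtain ⟨S, hS⟩ : ∃ S : ℝ, ∀ s ≥ S, 0 < Q s :=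
      Filter.eventually_atTop.1 (hlim.eventually (eventually_gt_nhds hvpos))
    set T : ℝ := max S 1 with hT
    have hT1 : (1:ℝ) ≤ T := le_max_right _ _
    have hT0 : (0:ℝ) < T := by linarith
    set δ : ℝ := (2 * Real.sqrt T)⁻¹ with hδ
    have hsqT : Real.sqrt T ^ 2 = T := Real.sq_sqrt hT0.le
    have hsqTpos : 0 < Real.sqrt T := Real.sqrt_pos.2 hT0
    have hδpos : 0 < δ := by rw [hδ]; positivity
    set h : ℝ → ℝ :=
      fun u => ∑ i, ∑ j, v i * v j * Real.exp (-(u ^ 2 + d i j ^ 2 / 4 / u ^ 2)) with hh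
    have hfac : ∀ u : ℝ, u ≠ 0 → h u = Real.exp (-(u ^ 2)) * Q ((4 * u ^ 2)⁻¹) := by
      intro u hu
      rw [hh, hQ, Finset.mul_sum]
      apply Finset.sum_congr rfl; intro i _
      rw [Finset.mul_sum]
      apply Finset.sum_congr rfl; intro j _
      rw [show -(u ^ 2 + d i j ^ 2 / 4 / u ^ 2)
          = -(u ^ 2) + -((4 * u ^ 2)⁻¹ * d i j ^ 2) by field_simp; ring, Real.exp_add]
      ring
    have hint : ∀ i j : Fin n, IntegrableOn
        (fun u : ℝ => v i * v j * Real.exp (-(u ^ 2 + d i j ^ 2 / 4 / u ^ 2))) (Ioi 0) := by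
      intro i j
      exact (glaisher_integrable (d i j ^ 2 / 4) (by positivity)).const_mul _
    have hhint : IntegrableOn h (Ioi 0) := by
      apply integrable_finset_sum; intro i _
      exact integrable_finset_sum _ fun j _ => hint i j
    have hEq : dotProduct (star v) (M.mulVec v)
        = (2 / Real.sqrt π) * ∫ u in Ioi (0:ℝ), h u := by
      rw [hdot]
      have hterm : ∀ i j : Fin n, v i * v j * Real.exp (-(d i j))
          = (2 / Real.sqrt π) * ∫ u in Ioi (0:ℝ),
              v i * v j * Real.exp (-(u ^ 2 + d i j ^ 2 / 4 / u ^ 2)) := by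
        intro i j
        rw [exp_neg_eq_integral (d i j) (hdnn i j), integral_const_mul]
        ring
      calc ∑ i, ∑ j, v i * v j * Real.exp (-(d i j))
          = ∑ i, ∑ j, (2 / Real.sqrt π) * ∫ u in Ioi (0:ℝ),
              v i * v j * Real.exp (-(u ^ 2 + d i j ^ 2 / 4 / u ^ 2)) := by
            exact Finset.sum_congr rfl fun i _ => Finset.sum_congr rfl fun j _ => hterm i j
        _ = (2 / Real.sqrt π) * ∑ i, ∑ j, ∫ u in Ioi (0:ℝ),
              v i * v j * Real.exp (-(u ^ 2 + d i j ^ 2 / 4 / u ^ 2)) := by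
            rw [Finset.mul_sum]
            exact Finset.sum_congr rfl fun i _ => (Finset.mul_sum _ _ _).symm
        _ = (2 / Real.sqrt π) * ∫ u in Ioi (0:ℝ), h u := by
            congr 1
            rw [hh]
            rw [integral_finset_sum _ fun i _ => integrable_finset_sum _ fun j _ => hint i j]
            exact Finset.sum_congr rfl fun i _ =>
              (integral_finset_sum _ fun j _ => hint i j).symm
    have hnn : ∀ u ∈ Ioi (0:ℝ), 0 ≤ h u := by
      intro u hu
      rw [hfac u (ne_of_gt hu)]
      exact mul_nonneg (Real.exp_pos _).le (hQnn _ (by positivity))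
    have hsupp : Ioo (0:ℝ) δ ⊆ Function.support h ∩ Ioi 0 := by
      intro u hu
      obtain ⟨hu0, huδ⟩ := hu
      have h4 : (0:ℝ) < 4 * u ^ 2 := by positivity
      have hQpos : 0 < Q ((4 * u ^ 2)⁻¹) := by
        apply hS
        have h2 : u ^ 2 < δ ^ 2 := by nlinarith
        have hδ2 : δ ^ 2 = (4 * T)⁻¹ := by
          rw [hδ, inv_pow, mul_pow, hsqT]
          norm_num
        have hTlt : T < (4 * u ^ 2)⁻¹ := by
          rw [inv_eq_one_div, lt_div_iff₀ h4]
          have : u ^ 2 * (4 * T) < 1 := by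
            calc u ^ 2 * (4 * T) < (4 * T)⁻¹ * (4 * T) := by
                  apply mul_lt_mul_of_pos_right _ (by positivity)
                  rw [← hδ2]; exact h2
              _ = 1 := inv_mul_cancel₀ (by positivity)
          nlinarith
        exact le_trans (le_max_left S 1) hTlt.le
      refine ⟨?_, hu0⟩
      rw [Function.mem_support, hfac u hu0.ne']
      exact (mul_pos (Real.exp_pos _) hQpos).ne'
    have hIpos : 0 < ∫ u in Ioi (0:ℝ), h u := by
      rw [setIntegral_pos_iff_support_of_nonneg_ae
        ((ae_restrict_iff' measurableSet_Ioi).2 (ae_of_all _ hnn)) hhint]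
      calc (0:ENNReal) < volume (Ioo (0:ℝ) δ) := by
            rw [Real.volume_Ioo]
            simp [ENNReal.ofReal_pos, hδpos]
        _ ≤ volume (Function.support h ∩ Ioi 0) := measure_mono hsupp
    rw [hEq]
    exact mul_pos (div_pos two_pos hπ) hIpos
  have hpd : M.PosDef := Matrix.PosDef.of_dotProduct_mulVec_pos herm hmain
  exact ⟨hpd, hpd.isUnit⟩
end

section
/- For each fixed integer m ≥ 1, the sequence d ↦ s^{(m)}_d := Γ(d/2)^{m+1} / ( Γ((d+1)/2)^m · Γ((d−m)/2) ), defined for integers d > m, is monotonically increasing in d and converges to 1 as d → ∞. -/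
open Filter

/-- The expected simplex skewness `s^{(m)}_d = Γ(d/2)^(m+1) / (Γ((d+1)/2)^m Γ((d−m)/2))`. -/
noncomputable def essSkewness (m d : ℕ) : ℝ :=
  Real.Gamma ((d : ℝ) / 2) ^ (m + 1) /
    (Real.Gamma (((d : ℝ) + 1) / 2) ^ m * Real.Gamma (((d : ℝ) - m) / 2))

section Aux
open Real

noncomputable def rr (x : ℝ) : ℝ := Real.Gamma (x + 1/2) / Real.Gamma x

lemma rr_pos {x : ℝ} (hx : 0 < x) : 0 < rr x :=
  div_pos (Real.Gamma_pos_of_pos (by linarith)) (Real.Gamma_pos_of_pos hx)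

lemma rr_mul {x : ℝ} (hx : 0 < x) : rr x * rr (x + 1/2) = x := by
  have h1 : Real.Gamma (x + 1/2 + 1/2) = x * Real.Gamma x := by
    rw [show x + 1/2 + 1/2 = x + 1 by ring, Real.Gamma_add_one hx.ne']
  have h2 := (Real.Gamma_pos_of_pos hx).ne'
  have h3 := (Real.Gamma_pos_of_pos (show (0:ℝ) < x + 1/2 by linarith)).ne'
  rw [rr, rr, div_mul_div_comm, h1, div_eq_iff (by positivity)]
  ring

-- midpoint convexity consequence: Γ((a+b)/2)^2 ≤ Γ a * Γ b for 0 < a,b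
lemma gamma_midpoint {a b : ℝ} (ha : 0 < a) (hb : 0 < b) :
    Real.Gamma ((a + b)/2) ^ 2 ≤ Real.Gamma a * Real.Gamma b := by
  have h := Real.convexOn_log_Gamma.2 (Set.mem_Ioi.2 ha) (Set.mem_Ioi.2 hb)
    (by norm_num : (0:ℝ) ≤ 1/2) (by norm_num : (0:ℝ) ≤ 1/2) (by norm_num)
  simp only [Function.comp, smul_eq_mul] at h
  have hmid : (1/2 : ℝ) * a + (1/2 : ℝ) * b = (a+b)/2 := by ring
  rw [hmid] at h
  have hga := Real.Gamma_pos_of_pos ha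
  have hgb := Real.Gamma_pos_of_pos hb
  have hgm := Real.Gamma_pos_of_pos (show (0:ℝ) < (a+b)/2 by linarith)
  have : Real.log (Real.Gamma ((a+b)/2) ^ 2) ≤ Real.log (Real.Gamma a * Real.Gamma b) := by
    rw [Real.log_pow, Real.log_mul hga.ne' hgb.ne']
    push_cast
    linarith
  exact (Real.log_le_log_iff (by positivity) (by positivity)).mp this

lemma rr_sq_le {x : ℝ} (hx : 0 < x) : rr x ^ 2 ≤ x := by
  have h := gamma_midpoint hx (show (0:ℝ) < x + 1 by linarith)
  rw [show (x + (x+1))/2 = x + 1/2 by ring, Real.Gamma_add_one hx.ne'] at h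
  have hg := Real.Gamma_pos_of_pos hx
  rw [rr, div_pow, div_le_iff₀ (by positivity)]
  calc Real.Gamma (x + 1/2) ^ 2 ≤ Real.Gamma x * (x * Real.Gamma x) := h
    _ = x * Real.Gamma x ^ 2 := by ring

lemma le_rr_sq {x : ℝ} (hx : 0 < x) : x^2 / (x + 1/2) ≤ rr x ^ 2 := by
  have h := gamma_midpoint (show (0:ℝ) < x + 1/2 by linarith) (show (0:ℝ) < x + 3/2 by linarith)
  rw [show (x + 1/2 + (x + 3/2))/2 = x + 1 by ring, Real.Gamma_add_one hx.ne',
    show x + 3/2 = (x + 1/2) + 1 by ring,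
    Real.Gamma_add_one (show x + 1/2 ≠ 0 by linarith)] at h
  have hg := Real.Gamma_pos_of_pos hx
  rw [rr, div_pow, le_div_iff₀ (by positivity), div_mul_eq_mul_div, div_le_iff₀ (by positivity)]
  nlinarith [sq_nonneg (Real.Gamma x)]

noncomputable def qq (x : ℝ) : ℝ := (x + 1/2) * rr x ^ 4 / x ^ 3

lemma qq_pos {x : ℝ} (hx : 0 < x) : 0 < qq x := by
  have := rr_pos hx; unfold qq; positivity

lemma rr_half_eq {x : ℝ} (hx : 0 < x) : rr (x + 1/2) = x / rr x := by
  have h := rr_mul hx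
  field_simp [(rr_pos hx).ne'] at h ⊢
  linarith [h]

lemma rr_succ {x : ℝ} (hx : 0 < x) : rr (x + 1) = (x + 1/2) / x * rr x := by
  have h2 : rr (x + 1/2 + 1/2) = (x + 1/2) / rr (x + 1/2) := rr_half_eq (by linarith)
  rw [show x + 1 = x + 1/2 + 1/2 by ring, h2, rr_half_eq hx]
  rw [div_div_eq_mul_div, div_mul_eq_mul_div, mul_comm]

lemma qq_lt_succ {x : ℝ} (hx : 0 < x) : qq x < qq (x + 1) := by
  have hr := rr_pos hx
  have hq : qq (x+1) * (x * (x+1)^3) = qq x * ((x+1/2)^3 * (x+3/2)) := by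
    unfold qq
    rw [rr_succ hx]
    field_simp
    ring
  have hqp := qq_pos hx
  have hfac : x * (x+1)^3 < (x+1/2)^3 * (x+3/2) := by nlinarith
  have h1 : qq x * (x * (x+1)^3) < qq x * ((x+1/2)^3 * (x+3/2)) := by
    apply mul_lt_mul_of_pos_left hfac hqp
  rw [← hq] at h1
  exact lt_of_mul_lt_mul_right h1 (by positivity)

lemma qq_bounds {x : ℝ} (hx : 0 < x) : x/(x+1/2) ≤ qq x ∧ qq x ≤ (x+1/2)/x := by
  have hr := rr_pos hx
  have h1 : rr x ^ 4 ≤ x^2 := by nlinarith [rr_sq_le hx]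
  have h2 : x^4 ≤ (x+1/2)^2 * rr x ^ 4 := by
    have h := le_rr_sq hx
    have h4 : (x^2/(x+1/2))^2 ≤ (rr x ^2)^2 := by
      apply pow_le_pow_left₀ (by positivity) h
    have he : (x^2/(x+1/2))^2 = x^4/(x+1/2)^2 := by
      rw [div_pow]; ring_nf
    rw [he] at h4
    rw [div_le_iff₀ (by positivity)] at h4
    nlinarith
  constructor
  · rw [qq, div_le_div_iff₀ (by positivity) (by positivity)]
    nlinarith
  · rw [qq, div_le_div_iff₀ (by positivity) (by positivity)]
    nlinarith

lemma aux_tendsto (c1 c2 : ℝ) :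
    Tendsto (fun n : ℕ => ((n:ℝ) + c1)/((n:ℝ) + c2)) atTop (nhds 1) := by
  have h1 : Tendsto (fun n : ℕ => 1 + c1/(n:ℝ)) atTop (nhds (1+0)) :=
    tendsto_const_nhds.add (tendsto_const_div_atTop_nhds_zero_nat c1)
  have h2 : Tendsto (fun n : ℕ => 1 + c2/(n:ℝ)) atTop (nhds (1+0)) :=
    tendsto_const_nhds.add (tendsto_const_div_atTop_nhds_zero_nat c2)
  have h3 := h1.div h2 (by norm_num)
  norm_num at h3
  refine h3.congr' ?_
  have hev := (tendsto_natCast_atTop_atTop (R := ℝ)).eventually_ge_atTop (|c2| + 1)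
  filter_upwards [hev] with n hn
  have hc2 : 0 < (n:ℝ) + c2 := by linarith [neg_abs_le c2]
  have hn0 : 0 < (n:ℝ) := by linarith [abs_nonneg c2]
  simp only [Pi.div_apply]
  field_simp

lemma qq_le_one {x : ℝ} (hx : 0 < x) : qq x ≤ 1 := by
  have mono : ∀ n : ℕ, qq x ≤ qq (x + n) := by
    intro n
    induction n with
    | zero => simp
    | succ k ih =>
        refine ih.trans (le_of_lt ?_)
        have := qq_lt_succ (show (0:ℝ) < x + k by positivity)
        rw [show x + ((k+1:ℕ):ℝ) = x + k + 1 by push_cast; ring]; exact this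
  have lower : ∀ n : ℕ, ((n:ℝ) + x)/((n:ℝ) + (x + 1/2)) ≤ qq (x + n) := by
    intro n
    have h := (qq_bounds (show (0:ℝ) < x + n by positivity)).1
    convert h using 2 <;> ring
  have upper : ∀ n : ℕ, qq (x + n) ≤ ((n:ℝ) + (x + 1/2))/((n:ℝ) + x) := by
    intro n
    have h := (qq_bounds (show (0:ℝ) < x + n by positivity)).2
    convert h using 2 <;> ring
  have lim : Tendsto (fun n : ℕ => qq (x + n)) atTop (nhds 1) :=
    tendsto_of_tendsto_of_tendsto_of_le_of_le (aux_tendsto x (x+1/2))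
      (aux_tendsto (x+1/2) x) (fun n => lower n) (fun n => upper n)
  exact ge_of_tendsto' lim mono

lemma qq_lt_one {x : ℝ} (hx : 0 < x) : qq x < 1 :=
  (qq_lt_succ hx).trans_le (qq_le_one (by linarith))

lemma key_ineq {x : ℝ} (hx : 0 < x) : (x + 1/2) * rr x ^ 4 < x ^ 3 := by
  have h := qq_lt_one hx
  rw [qq, div_lt_one (by positivity)] at h
  exact h

noncomputable def Rf (x : ℝ) : ℝ := x / rr x ^ 2

lemma Rf_anti_half {x : ℝ} (hx : 0 < x) : Rf (x + 1/2) < Rf x := by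
  have hr := rr_pos hx
  have h := key_ineq hx
  rw [Rf, Rf, rr_half_eq hx, div_pow, div_div_eq_mul_div,
    div_lt_div_iff₀ (by positivity) (by positivity)]
  nlinarith

lemma Rf_anti_grid (j : ℕ) : ∀ {x : ℝ}, 0 < x → Rf (x + ((j:ℝ)+1)/2) < Rf x := by
  induction j with
  | zero =>
      intro x hx
      have := Rf_anti_half hx
      convert this using 2
      norm_num
  | succ k ih =>
      intro x hx
      have h1 := ih (show (0:ℝ) < x + 1/2 by linarith)
      have h2 := Rf_anti_half hx
      have e : x + (((k:ℕ):ℝ)+1+1)/2 = (x + 1/2) + (((k:ℕ):ℝ)+1)/2 := by ring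
      calc Rf (x + ((((k+1):ℕ):ℝ)+1)/2) = Rf ((x + 1/2) + (((k:ℕ):ℝ)+1)/2) := by
            push_cast; rw [e]
        _ < Rf (x + 1/2) := h1
        _ < Rf x := h2

lemma term_lt {y x : ℝ} (hy : 0 < y) (hx : 0 < x) (h : Rf x < Rf y) :
    rr y / rr x < rr (y + 1/2) / rr (x + 1/2) := by
  have hry := rr_pos hy
  have hrx := rr_pos hx
  rw [rr_half_eq hy, rr_half_eq hx, Rf, Rf, div_lt_div_iff₀ (by positivity) (by positivity)] at *
  rw [show rr y * (x / rr x) = (rr y * x)/rr x by ring,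
    show y / rr y * rr x = (y * rr x)/rr y by ring,
    div_lt_div_iff₀ hrx hry]
  nlinarith

lemma gamma_prod (m : ℕ) : ∀ d : ℕ, m < d → Real.Gamma ((d:ℝ)/2) =
    Real.Gamma (((d:ℝ) - m)/2) * ∏ k ∈ Finset.range m, rr (((d:ℝ) - ((k:ℝ)+1))/2) := by
  induction m with
  | zero => intro d _; simp
  | succ n ih =>
      intro d hd
      have hdn : ((n:ℝ)+1) < (d:ℝ) := by exact_mod_cast hd
      have hy : (0:ℝ) < ((d:ℝ) - ((n:ℝ)+1))/2 := by linarith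
      have hg : Real.Gamma (((d:ℝ) - (n:ℝ))/2)
          = rr (((d:ℝ) - ((n:ℝ)+1))/2) * Real.Gamma (((d:ℝ) - ((n:ℝ)+1))/2) := by
        have hne := (Real.Gamma_pos_of_pos hy).ne'
        rw [rr, div_mul_cancel₀ _ hne, show ((d:ℝ) - ((n:ℝ)+1))/2 + 1/2 = ((d:ℝ) - (n:ℝ))/2 by ring]
      rw [ih d (by omega), Finset.prod_range_succ]
      push_cast
      rw [hg]
      ring

lemma ess_prod (m d : ℕ) (hd : m < d) :
    essSkewness m d
      = ∏ k ∈ Finset.range m, (rr (((d:ℝ) - ((k:ℝ)+1))/2) / rr ((d:ℝ)/2)) := by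
  have hd0 : (0:ℝ) < (d:ℝ)/2 := by
    have : 0 < d := by omega
    positivity
  have hdm : ((m:ℝ)) < (d:ℝ) := by exact_mod_cast hd
  have hGdm := Real.Gamma_pos_of_pos (show (0:ℝ) < ((d:ℝ) - (m:ℝ))/2 by linarith)
  have hGd := Real.Gamma_pos_of_pos hd0
  have hrd := rr_pos hd0
  have hga : Real.Gamma (((d:ℝ) + 1)/2) = rr ((d:ℝ)/2) * Real.Gamma ((d:ℝ)/2) := by
    rw [rr, div_mul_cancel₀ _ hGd.ne', show (d:ℝ)/2 + 1/2 = ((d:ℝ)+1)/2 by ring]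
  rw [Finset.prod_div_distrib, Finset.prod_const, Finset.card_range, essSkewness,
    div_eq_div_iff (by positivity) (by positivity), hga, gamma_prod m d hd]
  ring

lemma ess_step (m d : ℕ) (hm : 1 ≤ m) (hd : m < d) :
    essSkewness m d < essSkewness m (d+1) := by
  rw [ess_prod m d hd, ess_prod m (d+1) (by omega)]
  have hdm : ((m:ℝ)) < (d:ℝ) := by exact_mod_cast hd
  refine Finset.prod_lt_prod_of_nonempty ?_ ?_ (Finset.nonempty_range_iff.2 (by omega))
  · intro k hk
    have hk2 : ((k:ℝ)+1) < (d:ℝ) := by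
      have : k + 1 < d := by have := Finset.mem_range.mp hk; omega
      exact_mod_cast this
    have hy : (0:ℝ) < ((d:ℝ) - ((k:ℝ)+1))/2 := by linarith
    exact div_pos (rr_pos hy) (rr_pos (by linarith [hk2, Nat.cast_nonneg (α := ℝ) k]))
  · intro k hk
    have hk2 : ((k:ℝ)+1) < (d:ℝ) := by
      have : k + 1 < d := by have := Finset.mem_range.mp hk; omega
      exact_mod_cast this
    have hy : (0:ℝ) < ((d:ℝ) - ((k:ℝ)+1))/2 := by linarith
    have hx : (0:ℝ) < (d:ℝ)/2 := by linarith [Nat.cast_nonneg (α := ℝ) k]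
    have hRf : Rf ((d:ℝ)/2) < Rf (((d:ℝ) - ((k:ℝ)+1))/2) := by
      have := Rf_anti_grid k hy
      rw [show ((d:ℝ) - ((k:ℝ)+1))/2 + ((k:ℝ)+1)/2 = (d:ℝ)/2 by ring] at this
      exact this
    have := term_lt hy hx hRf
    rw [show ((d:ℝ) - ((k:ℝ)+1))/2 + 1/2 = (((d+1:ℕ):ℝ) - ((k:ℝ)+1))/2 by push_cast; ring,
      show (d:ℝ)/2 + 1/2 = ((d+1:ℕ):ℝ)/2 by push_cast; ring] at this
    exact this

lemma term_tendsto (k : ℕ) :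
    Tendsto (fun d : ℕ => rr (((d:ℝ) - ((k:ℝ)+1))/2) / rr ((d:ℝ)/2)) atTop (nhds 1) := by
  set g : ℕ → ℝ := fun d => rr (((d:ℝ) - ((k:ℝ)+1))/2) / rr ((d:ℝ)/2) with hg
  have hbig : ∀ᶠ d : ℕ in atTop, k + 2 ≤ d := eventually_ge_atTop _
  have hyx : ∀ d : ℕ, k + 2 ≤ d → (0:ℝ) < ((d:ℝ) - ((k:ℝ)+1))/2 ∧ (0:ℝ) < (d:ℝ)/2 := by
    intro d hd
    have h1 : ((k:ℝ) + 2) ≤ (d:ℝ) := by exact_mod_cast hd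
    constructor <;> linarith
  have hsq : Tendsto (fun d : ℕ => (g d)^2) atTop (nhds 1) := by
    have hL : Tendsto (fun d : ℕ => (((d:ℝ) + (-(k:ℝ)-1))/((d:ℝ) + (-(k:ℝ)))) *
        (((d:ℝ) + (-(k:ℝ)-1))/((d:ℝ) + 0))) atTop (nhds (1*1)) :=
      (aux_tendsto (-(k:ℝ)-1) (-(k:ℝ))).mul (aux_tendsto (-(k:ℝ)-1) 0)
    have hU : Tendsto (fun d : ℕ => (((d:ℝ) + (-(k:ℝ)-1))/((d:ℝ) + 0)) *
        (((d:ℝ) + 1)/((d:ℝ) + 0))) atTop (nhds (1*1)) :=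
      (aux_tendsto (-(k:ℝ)-1) 0).mul (aux_tendsto 1 0)
    rw [one_mul] at hL hU
    refine tendsto_of_tendsto_of_tendsto_of_le_of_le' hL hU ?_ ?_
    · filter_upwards [hbig] with d hd
      obtain ⟨hy, hx⟩ := hyx d hd
      set y := ((d:ℝ) - ((k:ℝ)+1))/2
      set x := (d:ℝ)/2
      have hA1 : y^2 ≤ rr y ^2 * (y + 1/2) := by
        have := le_rr_sq hy
        rw [div_le_iff₀ (by linarith)] at this
        linarith
      have hB2 : rr x ^2 ≤ x := rr_sq_le hx
      have hAp := rr_pos hy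
      have hBp := rr_pos hx
      have e1 : (d:ℝ) + (-(k:ℝ)-1) = 2*y := by simp [y]; ring
      have e2 : (d:ℝ) + (-(k:ℝ)) = 2*(y+1/2) := by simp [y]; ring
      have e3 : (d:ℝ) + 0 = 2*x := by simp [x]; ring
      rw [hg, e1, e2, e3]
      have egsq : (rr y / rr x)^2 = rr y ^2 / rr x ^2 := by rw [div_pow]
      rw [show (rr (((d:ℝ) - ((k:ℝ)+1))/2) / rr ((d:ℝ)/2))^2 = rr y ^2 / rr x ^2 from egsq]
      rw [div_mul_div_comm, div_le_div_iff₀ (by positivity) (by positivity)]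
      nlinarith [sq_nonneg (rr y), sq_nonneg (rr x), mul_pos hy hx]
    · filter_upwards [hbig] with d hd
      obtain ⟨hy, hx⟩ := hyx d hd
      set y := ((d:ℝ) - ((k:ℝ)+1))/2
      set x := (d:ℝ)/2
      have hA2 : rr y ^2 ≤ y := rr_sq_le hy
      have hB1 : x^2 ≤ rr x ^2 * (x + 1/2) := by
        have := le_rr_sq hx
        rw [div_le_iff₀ (by linarith)] at this
        linarith
      have hAp := rr_pos hy
      have hBp := rr_pos hx
      have e1 : (d:ℝ) + (-(k:ℝ)-1) = 2*y := by simp [y]; ring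
      have e3 : (d:ℝ) + 0 = 2*x := by simp [x]; ring
      have e4 : (d:ℝ) + 1 = 2*(x+1/2) := by simp [x]; ring
      rw [hg, e1, e3, e4]
      have egsq : (rr y / rr x)^2 = rr y ^2 / rr x ^2 := by rw [div_pow]
      rw [show (rr (((d:ℝ) - ((k:ℝ)+1))/2) / rr ((d:ℝ)/2))^2 = rr y ^2 / rr x ^2 from egsq]
      rw [div_mul_div_comm, div_le_div_iff₀ (by positivity) (by positivity)]
      nlinarith [sq_nonneg (rr y), sq_nonneg (rr x), mul_pos hy hx]
  have hcont : Tendsto (fun d : ℕ => Real.sqrt ((g d)^2)) atTop (nhds 1) := by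
    have h1 : Real.sqrt 1 = 1 := Real.sqrt_one
    have := (Real.continuous_sqrt.tendsto' 1 1 h1).comp hsq
    exact this
  refine hcont.congr' ?_
  filter_upwards [hbig] with d hd
  obtain ⟨hy, hx⟩ := hyx d hd
  exact Real.sqrt_sq (le_of_lt (div_pos (rr_pos hy) (rr_pos hx)))

end Aux

/-- For each fixed `m ≥ 1`, the sequence `d ↦ s^{(m)}_d` (defined for integers `d > m`) is
monotonically increasing in `d` and converges to `1` as `d → ∞`. -/
theorem essSkewness_mono_tendsto_one (m : ℕ) (hm : 1 ≤ m) :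
    StrictMonoOn (fun d : ℕ => essSkewness m d) {d : ℕ | m < d} ∧
      Tendsto (fun d : ℕ => essSkewness m d) atTop (nhds 1) := by
  constructor
  · intro a ha b _ hab
    simp only [Set.mem_setOf_eq] at ha
    have claim : ∀ c : ℕ, essSkewness m a < essSkewness m (a + c + 1) := by
      intro c
      induction c with
      | zero => exact ess_step m a hm ha
      | succ n ih =>
          refine ih.trans ?_
          have := ess_step m (a + n + 1) hm (by omega)
          simpa [Nat.add_assoc, Nat.add_comm, Nat.add_left_comm] using this
    obtain ⟨c, rfl⟩ := Nat.exists_eq_add_of_lt hab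
    exact claim c
  · have hprod : Tendsto (fun d : ℕ =>
        ∏ k ∈ Finset.range m, (rr (((d:ℝ) - ((k:ℝ)+1))/2) / rr ((d:ℝ)/2)))
        atTop (nhds (∏ _k ∈ Finset.range m, (1:ℝ))) :=
      tendsto_finset_prod _ (fun k _ => term_tendsto k)
    rw [Finset.prod_const_one] at hprod
    refine hprod.congr' ?_
    filter_upwards [eventually_gt_atTop m] with d hd
    exact (ess_prod m d hd).symm
end

section
/- Let d ≥ 1 be an integer and let p, q ∈ ℝ^d with ‖p − q‖ = 1. Then the ratio of the Lebesgue volume of the intersection of the two closed unit balls centred at p and q to the volume of a single unit ball is vol(B(p,1) ∩ B(q,1)) / vol(B(p,1)) = I_{3/4}((d+1)/2, 1/2), where I_x(a, b) = ( ∫₀^x t^{a−1}(1−t)^{b−1} dt ) / ( ∫₀^1 t^{a−1}(1−t)^{b−1} dt ) is the regularized incomplete beta function. -/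
open Metric MeasureTheory

/-- The regularized incomplete beta function
`I_x(a, b) = (∫₀ˣ t^(a−1) (1−t)^(b−1) dt) / (∫₀¹ t^(a−1) (1−t)^(b−1) dt)`. -/
noncomputable def regIncompleteBeta (x a b : ℝ) : ℝ :=
  (∫ t in (0 : ℝ)..x, t ^ (a - 1) * (1 - t) ^ (b - 1)) /
    (∫ t in (0 : ℝ)..1, t ^ (a - 1) * (1 - t) ^ (b - 1))

section Aux

open intervalIntegral Set

lemma contOneSub {c : ℝ} (hc : 0 ≤ c) : Continuous (fun s : ℝ => (1 - s^2) ^ c) :=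
  (Real.continuous_rpow_const hc).comp (by continuity)

lemma betaSubst {c x : ℝ} (hc : 0 ≤ c) (hx0 : 0 ≤ x) (hx1 : x < 1) :
    ∫ t in (0:ℝ)..x, t ^ c * (1 - t) ^ (-(1/2) : ℝ)
      = 2 * ∫ s in Real.sqrt (1-x)..1, (1 - s^2) ^ c := by
  have ha0 : 0 < Real.sqrt (1 - x) := Real.sqrt_pos.2 (by linarith)
  have ha1 : Real.sqrt (1 - x) ≤ 1 := by
    have := Real.sqrt_le_sqrt (show 1 - x ≤ 1 by linarith)
    simpa using this
  have key : (∫ s in Real.sqrt (1-x)..1, (-(2*s)) • ((fun t => t ^ c * (1 - t) ^ (-(1/2) : ℝ)) ∘ (fun s => 1 - s^2)) s)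
      = ∫ t in (1 - Real.sqrt (1-x)^2)..(1 - (1:ℝ)^2), t ^ c * (1 - t) ^ (-(1/2) : ℝ) := by
    apply integral_comp_smul_deriv' (f := fun s => 1 - s^2) (f' := fun s => -(2*s))
    · intro s _
      simpa using ((hasDerivAt_pow 2 s).const_sub 1)
    · exact (Continuous.continuousOn (by continuity))
    · intro t ht
      obtain ⟨s, hs, rfl⟩ := ht
      rw [uIcc_of_le ha1] at hs
      have hs0 : 0 < s := lt_of_lt_of_le ha0 hs.1
      apply ContinuousWithinAt.mul
      · exact (Real.continuousAt_rpow_const _ _ (Or.inr hc)).continuousWithinAt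
      · apply ContinuousAt.continuousWithinAt
        apply ContinuousAt.rpow_const
        · exact continuousAt_const.sub continuousAt_id
        · left
          intro h
          simp only at h
          nlinarith
  have hsq : Real.sqrt (1-x)^2 = 1 - x := Real.sq_sqrt (by linarith)
  rw [hsq] at key
  simp only [one_pow, sub_self, sub_sub_cancel] at key
  have key3 : (∫ s in Real.sqrt (1-x)..1, (-(2*s)) • ((fun t => t ^ c * (1 - t) ^ (-(1/2) : ℝ)) ∘ (fun s => 1 - s^2)) s)
      = (-2) * ∫ s in Real.sqrt (1-x)..1, (1 - s^2) ^ c := by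
    rw [← intervalIntegral.integral_const_mul]
    apply integral_congr
    intro s hs
    rw [uIcc_of_le ha1] at hs
    have hs0 : 0 < s := lt_of_lt_of_le ha0 hs.1
    have hinv : ((1:ℝ) - (1 - s^2)) ^ (-(1/2) : ℝ) = s⁻¹ := by
      have h2 : (1:ℝ) - (1 - s^2) = s^2 := by ring
      rw [h2, ← Real.rpow_natCast s 2, ← Real.rpow_mul hs0.le]
      norm_num
      rw [Real.rpow_neg_one]
    simp only [Function.comp_apply, smul_eq_mul, hinv]
    field_simp
  rw [intervalIntegral.integral_symm x 0, ← key, key3]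
  ring

lemma betaIntegrable {c : ℝ} (hc : 0 ≤ c) :
    IntervalIntegrable (fun t : ℝ => t ^ c * (1 - t) ^ (-(1/2):ℝ)) volume 0 1 := by
  have h1 : IntervalIntegrable (fun t : ℝ => t ^ (-(1/2):ℝ)) volume 0 1 :=
    intervalIntegrable_rpow' (by norm_num)
  have h2 := h1.comp_sub_left 1
  have h2' : IntervalIntegrable (fun x : ℝ => (1-x) ^ (-(1/2):ℝ)) volume 0 1 := by
    simpa using h2.symm
  exact h2'.continuousOn_mul
    (fun t _ => (Real.continuousAt_rpow_const _ _ (Or.inr hc)).continuousWithinAt)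

lemma betaFull {c : ℝ} (hc : 0 ≤ c) :
    ∫ t in (0:ℝ)..1, t ^ c * (1 - t) ^ (-(1/2):ℝ) = 2 * ∫ s in (0:ℝ)..1, (1 - s^2) ^ c := by
  set g := fun t : ℝ => t ^ c * (1 - t) ^ (-(1/2):ℝ) with hg
  set F := fun x : ℝ => ∫ t in (0:ℝ)..x, g t with hF
  set G := fun x : ℝ => 2 * ∫ s in (Real.sqrt (1-x))..1, (1 - s^2) ^ c with hGdef
  have hFcont : ContinuousOn F (uIcc 0 1) :=
    continuousOn_primitive_interval' (μ := volume) (betaIntegrable hc) left_mem_uIcc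
  have hprim : Continuous (fun y : ℝ => ∫ s in y..(1:ℝ), (1 - s^2) ^ c) := by
    have h := intervalIntegral.continuous_primitive
      (fun a b => ((contOneSub hc).intervalIntegrable (μ := volume) a b)) 1
    have : (fun y : ℝ => ∫ s in y..(1:ℝ), (1 - s^2) ^ c)
        = fun y : ℝ => -∫ s in (1:ℝ)..y, (1 - s^2) ^ c := by
      funext y; rw [intervalIntegral.integral_symm]
    rw [this]
    exact h.neg
  have hG : Continuous G := by
    apply continuous_const.mul
    exact hprim.comp (Real.continuous_sqrt.comp (by continuity))
  set l := nhdsWithin (1:ℝ) (Ico 0 1) with hl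
  have hlne : l.NeBot := by
    rw [hl, ← mem_closure_iff_nhdsWithin_neBot, closure_Ico (zero_ne_one)]
    exact ⟨zero_le_one, le_refl 1⟩
  have hFl : Filter.Tendsto F l (nhds (F 1)) := by
    have h1 : ContinuousWithinAt F (uIcc 0 1) 1 := hFcont 1 right_mem_uIcc
    rw [uIcc_of_le zero_le_one] at h1
    exact h1.tendsto.mono_left (nhdsWithin_mono _ Ico_subset_Icc_self)
  have hGl : Filter.Tendsto G l (nhds (G 1)) :=
    (hG.tendsto 1).mono_left nhdsWithin_le_nhds
  have heq : F =ᶠ[l] G :=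
    Filter.eventually_of_mem self_mem_nhdsWithin
      (fun x hx => betaSubst hc hx.1 hx.2)
  have h11 : F 1 = G 1 := tendsto_nhds_unique ((Filter.tendsto_congr' heq).mp hFl) hGl
  have : G 1 = 2 * ∫ s in (0:ℝ)..1, (1 - s^2) ^ c := by
    rw [hGdef]
    norm_num
  rw [← this, ← h11]

lemma reg_eq {c : ℝ} (hc : 0 ≤ c) :
    regIncompleteBeta (3/4) (c+1) (1/2)
      = (∫ s in (1/2:ℝ)..1, (1-s^2)^c) / (∫ s in (0:ℝ)..1, (1-s^2)^c) := by
  unfold regIncompleteBeta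
  rw [show c+1-1 = c by ring, show (1:ℝ)/2-1 = -(1/2) by norm_num]
  rw [betaFull hc, betaSubst hc (by norm_num) (by norm_num)]
  rw [show (1:ℝ) - 3/4 = (1/2)^2 by norm_num, Real.sqrt_sq (by norm_num)]
  rw [mul_div_mul_left _ _ (two_ne_zero)]

lemma pi_slice (n : ℕ) (m : ℝ → ℝ) (hm : Continuous m) (a b : ℝ) (hab : a ≤ b)
    (hneg : ∀ t, t ∉ Set.Icc a b → m t < 0) (hnn : ∀ t ∈ Set.Icc a b, 0 ≤ m t) :
    volume {x : Fin (n+1) → ℝ | ∑ j : Fin n, (x j.succ)^2 ≤ m (x 0)}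
      = ENNReal.ofReal (∫ t in a..b, (m t) ^ ((n:ℝ)/2))
        * volume (closedBall (0 : EuclideanSpace ℝ (Fin n)) 1) := by
  set Vn := volume (closedBall (0 : EuclideanSpace ℝ (Fin n)) 1) with hVn
  set T : Set (Fin (n+1) → ℝ) := {x | ∑ j : Fin n, (x j.succ)^2 ≤ m (x 0)} with hT
  have hTmeas : MeasurableSet T := by
    apply measurableSet_le
    · exact Finset.measurable_sum _ (fun j _ => ((measurable_pi_apply _).pow_const 2))
    · exact hm.measurable.comp (measurable_pi_apply 0)
  set φ := MeasurableEquiv.piFinSuccAbove (fun _ : Fin (n+1) => ℝ) 0 with hφ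
  have hmp : MeasurePreserving φ.symm :=
    (volume_preserving_piFinSuccAbove (fun _ : Fin (n+1) => ℝ) 0).symm
  have h1 : volume T = volume (φ.symm ⁻¹' T) :=
    (hmp.measure_preimage hTmeas.nullMeasurableSet).symm
  have hpre : φ.symm ⁻¹' T = {p : ℝ × (Fin n → ℝ) | ∑ j : Fin n, (p.2 j)^2 ≤ m p.1} := by
    ext ⟨t, y⟩
    simp only [hT, Set.mem_preimage, Set.mem_setOf_eq, hφ,
      MeasurableEquiv.piFinSuccAbove_symm_apply]
    have h0 : (Fin.insertNthEquiv (fun _ : Fin (n+1) => ℝ) 0) (t, y) 0 = t := by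
      simp [Fin.insertNthEquiv]
    have hsucc : ∀ j : Fin n,
        (Fin.insertNthEquiv (fun _ : Fin (n+1) => ℝ) 0) (t, y) j.succ = y j := by
      intro j
      have := Fin.insertNth_apply_succAbove (α := fun _ : Fin (n+1) => ℝ) 0 t y j
      simpa [Fin.insertNthEquiv, Fin.zero_succAbove] using this
    rw [h0]
    simp [hsucc]
  have hcg : Continuous (fun t : ℝ => (m t) ^ ((n:ℝ)/2)) :=
    (Real.continuous_rpow_const (by positivity)).comp hm
  have hslice : ∀ t : ℝ, volume {y : Fin n → ℝ | ∑ j : Fin n, (y j)^2 ≤ m t}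
      = Set.indicator (Set.Icc a b)
          (fun t => ENNReal.ofReal ((m t) ^ ((n:ℝ)/2)) * Vn) t := by
    intro t
    by_cases ht : t ∈ Set.Icc a b
    · rw [Set.indicator_of_mem ht]
      have hmt : 0 ≤ m t := hnn t ht
      have hA : MeasurableSet {y : Fin n → ℝ | ∑ j : Fin n, (y j)^2 ≤ m t} :=
        measurableSet_le (by fun_prop) measurable_const
      have hvol := (EuclideanSpace.volume_preserving_symm_measurableEquiv_toLp
        (Fin n)).measure_preimage hA.nullMeasurableSet
      have hpre2 : (MeasurableEquiv.toLp 2 (Fin n → ℝ)).symm ⁻¹'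
          {y : Fin n → ℝ | ∑ j : Fin n, (y j)^2 ≤ m t}
          = closedBall (0 : EuclideanSpace ℝ (Fin n)) (Real.sqrt (m t)) := by
        ext z
        simp only [Set.mem_preimage, Set.mem_setOf_eq, mem_closedBall, dist_zero_right,
          EuclideanSpace.norm_eq, MeasurableEquiv.coe_toLp_symm,
          Real.norm_eq_abs, sq_abs]
        exact (Real.sqrt_le_sqrt_iff hmt).symm
      rw [← hvol, hpre2, Measure.addHaar_closedBall' _ _ (Real.sqrt_nonneg _),
        finrank_euclideanSpace_fin]
      congr 1
      congr 1
      rw [← Real.rpow_natCast (Real.sqrt (m t)) n, Real.sqrt_eq_rpow,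
        ← Real.rpow_mul hmt, show (1/2) * (n:ℝ) = (n:ℝ)/2 by ring]
    · rw [Set.indicator_of_notMem ht]
      have : {y : Fin n → ℝ | ∑ j : Fin n, (y j)^2 ≤ m t} = ∅ := by
        apply Set.eq_empty_iff_forall_notMem.mpr
        intro y hy
        simp only [Set.mem_setOf_eq] at hy
        have h0 : (0:ℝ) ≤ ∑ j : Fin n, (y j)^2 := Finset.sum_nonneg fun j _ => sq_nonneg _
        have := hneg t ht
        linarith
      rw [this, measure_empty]
  have hU : MeasurableSet {p : ℝ × (Fin n → ℝ) | ∑ j : Fin n, (p.2 j)^2 ≤ m p.1} := by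
    apply measurableSet_le
    · exact Finset.measurable_sum _
        (fun j _ => (((measurable_pi_apply _).comp measurable_snd).pow_const 2))
    · exact hm.measurable.comp measurable_fst
  rw [h1, hpre, Measure.volume_eq_prod, Measure.prod_apply hU]
  have hpt : ∀ t : ℝ, (Prod.mk t ⁻¹' {p : ℝ × (Fin n → ℝ) | ∑ j : Fin n, (p.2 j)^2 ≤ m p.1})
      = {y : Fin n → ℝ | ∑ j : Fin n, (y j)^2 ≤ m t} := fun t => rfl
  calc (∫⁻ t, volume (Prod.mk t ⁻¹' {p : ℝ × (Fin n → ℝ) | ∑ j : Fin n, (p.2 j)^2 ≤ m p.1}))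
      = ∫⁻ t, Set.indicator (Set.Icc a b)
          (fun t => ENNReal.ofReal ((m t) ^ ((n:ℝ)/2)) * Vn) t := by
        apply lintegral_congr
        intro t
        rw [hpt t, hslice t]
    _ = ∫⁻ t in Set.Icc a b, ENNReal.ofReal ((m t) ^ ((n:ℝ)/2)) * Vn := by
        rw [lintegral_indicator measurableSet_Icc]
    _ = (∫⁻ t in Set.Icc a b, ENNReal.ofReal ((m t) ^ ((n:ℝ)/2))) * Vn :=
        lintegral_mul_const' Vn _ (measure_closedBall_lt_top).ne
    _ = ENNReal.ofReal (∫ t in Set.Icc a b, (m t) ^ ((n:ℝ)/2)) * Vn := by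
        rw [← ofReal_integral_eq_lintegral_ofReal
          (hcg.integrableOn_Icc)
          ((ae_restrict_iff' measurableSet_Icc).2 (Filter.Eventually.of_forall
            (fun t ht => Real.rpow_nonneg (hnn t ht) _)))]
    _ = ENNReal.ofReal (∫ t in a..b, (m t) ^ ((n:ℝ)/2)) * Vn := by
        rw [intervalIntegral.integral_of_le hab, integral_Icc_eq_integral_Ioc]

lemma vol_ball_slice (n : ℕ) :
    volume (closedBall (0 : EuclideanSpace ℝ (Fin (n+1))) 1)
      = ENNReal.ofReal (∫ t in (-1:ℝ)..1, (1 - t^2) ^ ((n:ℝ)/2))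
        * volume (closedBall (0 : EuclideanSpace ℝ (Fin n)) 1) := by
  have hψ := (EuclideanSpace.volume_preserving_symm_measurableEquiv_toLp (Fin (n+1))).measure_preimage
    (s := {x : Fin (n+1) → ℝ | ∑ j : Fin n, (x j.succ)^2 ≤ 1 - (x 0)^2})
    (measurableSet_le (by fun_prop) (by fun_prop)).nullMeasurableSet
  have hset : (MeasurableEquiv.toLp 2 (Fin (n+1) → ℝ)).symm ⁻¹'
      {x : Fin (n+1) → ℝ | ∑ j : Fin n, (x j.succ)^2 ≤ 1 - (x 0)^2}
      = closedBall (0 : EuclideanSpace ℝ (Fin (n+1))) 1 := by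
    ext z
    simp only [Set.mem_preimage, Set.mem_setOf_eq, mem_closedBall, dist_zero_right,
      EuclideanSpace.norm_eq, MeasurableEquiv.coe_toLp_symm,
      Real.norm_eq_abs, sq_abs]
    have hs : ∑ i : Fin (n+1), (z i)^2 = (z 0)^2 + ∑ j : Fin n, (z j.succ)^2 :=
      Fin.sum_univ_succ _
    have h1 : Real.sqrt (∑ i : Fin (n+1), (z i)^2) ≤ 1 ↔ ∑ i : Fin (n+1), (z i)^2 ≤ 1 := by
      have := Real.sqrt_le_sqrt_iff (x := ∑ i : Fin (n+1), (z i)^2) (y := (1:ℝ)) zero_le_one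
      rwa [Real.sqrt_one] at this
    rw [h1, hs]
    constructor <;> intro h <;> linarith
  rw [hset] at hψ
  rw [hψ, pi_slice n (fun t => 1 - t^2) (by continuity) (-1) 1 (by norm_num)]
  · intro t ht
    rw [Set.mem_Icc, not_and_or, not_le, not_le] at ht
    rcases ht with h | h <;> nlinarith
  · intro t ht
    rw [Set.mem_Icc] at ht
    nlinarith [ht.1, ht.2]

lemma vol_inter_slice (n : ℕ) :
    volume (closedBall (0 : EuclideanSpace ℝ (Fin (n+1))) 1
        ∩ closedBall (EuclideanSpace.single (0 : Fin (n+1)) (1:ℝ)) 1)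
      = ENNReal.ofReal (∫ t in (0:ℝ)..1, (min (1 - t^2) (1 - (t-1)^2)) ^ ((n:ℝ)/2))
        * volume (closedBall (0 : EuclideanSpace ℝ (Fin n)) 1) := by
  set m : ℝ → ℝ := fun t => min (1 - t^2) (1 - (t-1)^2) with hm
  have hψ := (EuclideanSpace.volume_preserving_symm_measurableEquiv_toLp (Fin (n+1))).measure_preimage
    (s := {x : Fin (n+1) → ℝ | ∑ j : Fin n, (x j.succ)^2 ≤ m (x 0)})
    (measurableSet_le (by fun_prop) (by fun_prop)).nullMeasurableSet
  have hset : (MeasurableEquiv.toLp 2 (Fin (n+1) → ℝ)).symm ⁻¹'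
      {x : Fin (n+1) → ℝ | ∑ j : Fin n, (x j.succ)^2 ≤ m (x 0)}
      = closedBall (0 : EuclideanSpace ℝ (Fin (n+1))) 1
        ∩ closedBall (EuclideanSpace.single (0 : Fin (n+1)) (1:ℝ)) 1 := by
    ext z
    simp only [Set.mem_preimage, Set.mem_setOf_eq, Set.mem_inter_iff, mem_closedBall,
      dist_zero_right, EuclideanSpace.norm_eq, MeasurableEquiv.coe_toLp_symm,
      Real.norm_eq_abs, sq_abs, EuclideanSpace.dist_eq]
    have hs : ∑ i : Fin (n+1), (z i)^2 = (z 0)^2 + ∑ j : Fin n, (z j.succ)^2 :=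
      Fin.sum_univ_succ _
    have hs2 : ∑ i : Fin (n+1), dist (z i) (EuclideanSpace.single (0 : Fin (n+1)) (1:ℝ) i)^2
        = (z 0 - 1)^2 + ∑ j : Fin n, (z j.succ)^2 := by
      rw [Fin.sum_univ_succ]
      congr 1
      · simp [EuclideanSpace.single_apply, Real.dist_eq, sq_abs]
      · apply Finset.sum_congr rfl
        intro j _
        simp [EuclideanSpace.single_apply, Fin.succ_ne_zero, Real.dist_eq, sq_abs]
    have h1 : ∀ (s : ℝ), 0 ≤ s → (Real.sqrt s ≤ 1 ↔ s ≤ 1) := by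
      intro s hsn
      have := Real.sqrt_le_sqrt_iff (x := s) (y := (1:ℝ)) zero_le_one
      rwa [Real.sqrt_one] at this
    rw [h1 _ (Finset.sum_nonneg fun i _ => sq_nonneg _),
      h1 _ (Finset.sum_nonneg fun i _ => sq_nonneg _), hs, hs2, le_min_iff]
    constructor <;> intro h <;> constructor <;> linarith [h.1, h.2]
  rw [hset] at hψ
  rw [hψ, pi_slice n m (by continuity) 0 1 (by norm_num)]
  · intro t ht
    rw [Set.mem_Icc, not_and_or, not_le, not_le] at ht
    rw [hm]
    rcases ht with h | h
    · apply lt_of_le_of_lt (min_le_right _ _); nlinarith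
    · apply lt_of_le_of_lt (min_le_left _ _); nlinarith
  · intro t ht
    rw [Set.mem_Icc] at ht
    rw [hm, le_min_iff]
    constructor <;> nlinarith [ht.1, ht.2]

lemma vol_inter_reduce (n : ℕ) (p q : EuclideanSpace ℝ (Fin (n+1))) (hpq : dist p q = 1) :
    volume (closedBall p 1 ∩ closedBall q 1)
      = volume (closedBall (0 : EuclideanSpace ℝ (Fin (n+1))) 1
          ∩ closedBall (EuclideanSpace.single (0 : Fin (n+1)) (1:ℝ)) 1) := by
  set e : EuclideanSpace ℝ (Fin (n+1)) := EuclideanSpace.single (0 : Fin (n+1)) (1:ℝ) with he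
  have hen : ‖e‖ = 1 := by rw [he, EuclideanSpace.norm_single]; simp
  set u : EuclideanSpace ℝ (Fin (n+1)) := q - p with hu
  have hun : ‖u‖ = 1 := by rw [hu, ← dist_eq_norm, dist_comm]; exact hpq
  -- translation
  have htrans : volume ((fun x : EuclideanSpace ℝ (Fin (n+1)) => p + x) ⁻¹' (closedBall p 1 ∩ closedBall q 1))
      = volume (closedBall p 1 ∩ closedBall q 1) := measure_preimage_add volume p _
  have hset1 : (fun x : EuclideanSpace ℝ (Fin (n+1)) => p + x) ⁻¹' (closedBall p 1 ∩ closedBall q 1)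
      = closedBall (0 : EuclideanSpace ℝ (Fin (n+1))) 1 ∩ closedBall u 1 := by
    ext x
    simp only [Set.mem_preimage, Set.mem_inter_iff, mem_closedBall, dist_eq_norm]
    constructor <;> intro h <;> constructor
    · simpa using h.1
    · have := h.2
      rwa [show p + x - q = x - (q - p) by abel] at this
    · simpa using h.1
    · have := h.2
      rwa [show p + x - q = x - (q - p) by abel]
  -- reflection
  set f := Submodule.reflection (ℝ ∙ (u - e))ᗮ with hf
  have hfu : f u = e := Submodule.reflection_sub (by rw [hun, hen])
  have hmp : MeasurePreserving f := f.measurePreserving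
  have hset2 : (f : EuclideanSpace ℝ (Fin (n+1)) → EuclideanSpace ℝ (Fin (n+1))) ⁻¹' (closedBall (0 : EuclideanSpace ℝ (Fin (n+1))) 1 ∩ closedBall e 1)
      = closedBall (0 : EuclideanSpace ℝ (Fin (n+1))) 1 ∩ closedBall u 1 := by
    ext x
    simp only [Set.mem_preimage, Set.mem_inter_iff, mem_closedBall, dist_eq_norm]
    have h1 : ‖f x - 0‖ = ‖x - 0‖ := by
      simp only [sub_zero]
      exact f.norm_map x
    have h2 : ‖f x - e‖ = ‖x - u‖ := by
      rw [← hfu, ← f.map_sub, f.norm_map]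
    rw [h1, h2]
  have hmeas : MeasurableSet (closedBall (0 : EuclideanSpace ℝ (Fin (n+1))) 1 ∩ closedBall e 1) :=
    measurableSet_closedBall.inter measurableSet_closedBall
  have := hmp.measure_preimage hmeas.nullMeasurableSet
  rw [hset2] at this
  rw [← htrans, hset1, this]

lemma int_ball_symm {c : ℝ} (hc : 0 ≤ c) :
    ∫ t in (-1:ℝ)..1, (1-t^2)^c = 2 * ∫ t in (0:ℝ)..1, (1-t^2)^c := by
  have hneg : ∫ t in (-1:ℝ)..0, (1-t^2)^c = ∫ t in (0:ℝ)..1, (1-t^2)^c := by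
    have h := intervalIntegral.integral_comp_neg (a := (0:ℝ)) (b := 1)
      (fun t : ℝ => (1-t^2)^c)
    simp only [neg_sq, neg_zero, neg_neg] at h
    rw [← h]
  have hadd := intervalIntegral.integral_add_adjacent_intervals
    (a := (-1:ℝ)) (b := 0) (c := 1)
    ((contOneSub hc).intervalIntegrable (μ := volume) _ _) ((contOneSub hc).intervalIntegrable (μ := volume) _ _)
  rw [← hadd, hneg]
  ring

lemma int_min_split {c : ℝ} (hc : 0 ≤ c) :
    ∫ t in (0:ℝ)..1, (min (1 - t^2) (1 - (t-1)^2)) ^ c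
      = 2 * ∫ t in (1/2:ℝ)..1, (1-t^2)^c := by
  have hcontmin : Continuous (fun t : ℝ => (min (1 - t^2) (1 - (t-1)^2)) ^ c) :=
    (Real.continuous_rpow_const hc).comp (by continuity)
  have hadd := intervalIntegral.integral_add_adjacent_intervals
    (a := (0:ℝ)) (b := 1/2) (c := 1)
    (hcontmin.intervalIntegrable (μ := volume) _ _) (hcontmin.intervalIntegrable (μ := volume) _ _)
  have h2 : ∫ t in (1/2:ℝ)..1, (min (1 - t^2) (1 - (t-1)^2)) ^ c
      = ∫ t in (1/2:ℝ)..1, (1-t^2)^c := by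
    apply intervalIntegral.integral_congr
    intro t ht
    rw [Set.uIcc_of_le (by norm_num)] at ht
    have h : min (1 - t^2) (1 - (t-1)^2) = 1 - t^2 := min_eq_left (by nlinarith [ht.1, ht.2])
    simp only [h]
  have h1 : ∫ t in (0:ℝ)..(1/2), (min (1 - t^2) (1 - (t-1)^2)) ^ c
      = ∫ t in (1/2:ℝ)..1, (1-t^2)^c := by
    have hcongr : ∫ t in (0:ℝ)..(1/2), (min (1 - t^2) (1 - (t-1)^2)) ^ c
        = ∫ t in (0:ℝ)..(1/2), (1-(1-t)^2)^c := by
      apply intervalIntegral.integral_congr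
      intro t ht
      rw [Set.uIcc_of_le (by norm_num)] at ht
      have h : min (1 - t^2) (1 - (t-1)^2) = 1 - (t-1)^2 :=
        min_eq_right (by nlinarith [ht.1, ht.2])
      show (min (1 - t^2) (1 - (t-1)^2)) ^ c = (1-(1-t)^2)^c
      rw [h, show (t-1)^2 = (1-t)^2 by ring]
    rw [hcongr]
    have h := intervalIntegral.integral_comp_sub_left (a := (0:ℝ)) (b := 1/2)
      (fun u : ℝ => (1-u^2)^c) 1
    norm_num at h
    rw [h]
  rw [← hadd, h1, h2]
  ring

lemma int_pos {c : ℝ} (hc : 0 ≤ c) : 0 < ∫ t in (0:ℝ)..1, (1-t^2)^c := by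
  apply intervalIntegral.intervalIntegral_pos_of_pos_on
    ((contOneSub hc).intervalIntegrable (μ := volume) _ _)
  · intro t ht
    exact Real.rpow_pos_of_pos (by nlinarith [ht.1, ht.2]) _
  · norm_num

lemma int_nonneg {c : ℝ} (hc : 0 ≤ c) : 0 ≤ ∫ t in (1/2:ℝ)..1, (1-t^2)^c := by
  apply intervalIntegral.integral_nonneg (by norm_num)
  intro t ht
  exact Real.rpow_nonneg (by nlinarith [ht.1, ht.2]) _

end Aux

open Set in
/-- For `p, q ∈ ℝ^d` with `‖p − q‖ = 1`, the ratio of the volume of the intersection of the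
two closed unit balls centred at `p` and `q` to the volume of a single unit ball equals
`I_{3/4}((d+1)/2, 1/2)`. -/
theorem volume_inter_unitBalls_ratio (d : ℕ) (hd : 1 ≤ d)
    (p q : EuclideanSpace ℝ (Fin d)) (hpq : dist p q = 1) :
    (volume (closedBall p 1 ∩ closedBall q 1)).toReal /
        (volume (closedBall p 1)).toReal =
      regIncompleteBeta (3 / 4) (((d : ℝ) + 1) / 2) (1 / 2) := by
  obtain ⟨n, rfl⟩ : ∃ n, d = n + 1 := ⟨d - 1, (Nat.succ_pred_eq_of_pos hd).symm⟩
  have hc : (0:ℝ) ≤ (n:ℝ)/2 := by positivity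
  have hball0 : volume (closedBall p 1)
      = volume (closedBall (0 : EuclideanSpace ℝ (Fin (n+1))) 1) :=
    Measure.addHaar_closedBall_center volume p 1
  rw [vol_inter_reduce n p q hpq, vol_inter_slice n, hball0, vol_ball_slice n,
    int_min_split hc, int_ball_symm hc]
  have harg : ((↑(n+1):ℝ) + 1)/2 = (n:ℝ)/2 + 1 := by push_cast; ring
  rw [harg, reg_eq hc]
  set a := ∫ s in (1/2:ℝ)..1, (1-s^2)^((n:ℝ)/2) with ha
  set b := ∫ s in (0:ℝ)..1, (1-s^2)^((n:ℝ)/2) with hb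
  have hbpos : 0 < b := int_pos hc
  have hanneg : 0 ≤ a := int_nonneg hc
  set Vn := volume (closedBall (0 : EuclideanSpace ℝ (Fin n)) 1) with hVn
  have hVtop : Vn ≠ ⊤ := measure_closedBall_lt_top.ne
  have hVpos : 0 < Vn.toReal :=
    ENNReal.toReal_pos ((measure_closedBall_pos volume _ one_pos).ne') hVtop
  rw [ENNReal.toReal_mul, ENNReal.toReal_mul,
    ENNReal.toReal_ofReal (by linarith), ENNReal.toReal_ofReal (by linarith)]
  rw [mul_div_mul_right _ _ hVpos.ne', mul_div_mul_left _ _ (two_ne_zero)]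
end
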